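/- Let H be a real Hilbert space, F : H → ℝ, and T > 0. Let u₁, u₂ : [0,T] → H be continuous functions for which there exist Bochner-integrable functions w₁, w₂ : [0,T] → H with uᵢ(t) = uᵢ(0) + ∫₀ᵗ wᵢ(s) ds for all t ∈ [0,T] (i = 1,2), and suppose that for almost every t ∈ (0,T) and for i = 1,2 one has the subgradient inequality F(φ) ≥ F(uᵢ(t)) + ⟨−wᵢ(t), φ − uᵢ(t)⟩ for all φ ∈ H. Then for all 0 ≤ s ≤ t ≤ T, ‖u₁(t) − u₂(t)‖ ≤ ‖u₁(s) − u₂(s)‖. In particular, if u₁(0) = u₂(0) then u₁ = u₂ on [0,T]. -/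

import Mathlib

open MeasureTheory
open scoped RealInnerProductSpace

lemma half_sq {H : Type*} [NormedAddCommGroup H] [InnerProductSpace ℝ H] [CompleteSpace H]
    {w : ℝ → H} {s t : ℝ} (hst : s ≤ t) (hw : IntegrableOn w (Set.Ioc s t)) :
    Integrable (fun r => ⟪w r, ∫ q in s..r, w q⟫) (volume.restrict (Set.Ioc s t)) ∧
    ∫ r in Set.Ioc s t, ⟪w r, ∫ q in s..r, w q⟫
      = 2⁻¹ * ‖∫ q in Set.Ioc s t, w q‖ ^ 2 := by
  set μ := volume.restrict (Set.Ioc s t) with hμdef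
  have hwμ : Integrable w μ := hw
  set k : ℝ × ℝ → ℝ := fun p => ⟪w p.1, w p.2⟫ with hkdef
  set E : Set (ℝ × ℝ) := {p | p.2 ∈ Set.Ioc s p.1} with hEdef
  set E' : Set (ℝ × ℝ) := {p | p.1 ∈ Set.Ioc s p.2} with hE'def
  have hEm : MeasurableSet E := by
    have : E = {p : ℝ × ℝ | s < p.2} ∩ {p : ℝ × ℝ | p.2 ≤ p.1} := by
      ext p; simp [hEdef, Set.Ioc, and_comm]
    rw [this]
    exact (measurableSet_lt measurable_const measurable_snd).inter
      (measurableSet_le measurable_snd measurable_fst)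
  have hE'm : MeasurableSet E' := by
    have : E' = {p : ℝ × ℝ | s < p.1} ∩ {p : ℝ × ℝ | p.1 ≤ p.2} := by
      ext p; simp [hE'def, Set.Ioc, and_comm]
    rw [this]
    exact (measurableSet_lt measurable_const measurable_fst).inter
      (measurableSet_le measurable_fst measurable_snd)
  have hkm : AEStronglyMeasurable k (μ.prod μ) :=
    (hwμ.aestronglyMeasurable.comp_fst).inner (hwμ.aestronglyMeasurable.comp_snd)
  have hkint : Integrable k (μ.prod μ) := by
    refine (hwμ.norm.mul_prod hwμ.norm).mono hkm ?_
    filter_upwards with p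
    have h1 : ‖k p‖ ≤ ‖w p.1‖ * ‖w p.2‖ := by
      rw [hkdef]; exact (abs_real_inner_le_norm _ _)
    calc ‖k p‖ ≤ ‖w p.1‖ * ‖w p.2‖ := h1
      _ ≤ ‖‖w p.1‖ * ‖w p.2‖‖ := le_abs_self _
  have hg : Integrable (E.indicator k) (μ.prod μ) := hkint.indicator hEm
  have hg' : Integrable (E'.indicator k) (μ.prod μ) := hkint.indicator hE'm
  -- pointwise formula
  have h1 : ∀ r ∈ Set.Ioc s t, ⟪w r, ∫ q in s..r, w q⟫ = ∫ q, E.indicator k (r, q) ∂μ := by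
    intro r hr
    have hint : ∫ q in s..r, w q = ∫ q, (Set.Ioc s r).indicator w q ∂μ := by
      rw [intervalIntegral.integral_of_le hr.1.le, integral_indicator measurableSet_Ioc,
        hμdef, Measure.restrict_restrict measurableSet_Ioc,
        Set.inter_eq_left.mpr (Set.Ioc_subset_Ioc le_rfl hr.2)]
    rw [hint, ← integral_inner (hwμ.indicator measurableSet_Ioc) (w r)]
    congr 1; ext q
    by_cases hq : q ∈ Set.Ioc s r
    · rw [Set.indicator_of_mem hq, Set.indicator_of_mem (by exact hq : (r, q) ∈ E)]
    · rw [Set.indicator_of_notMem hq, Set.indicator_of_notMem (by exact hq : (r, q) ∉ E),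
        inner_zero_right]
  have h1ae : (fun r => ⟪w r, ∫ q in s..r, w q⟫) =ᵐ[μ] fun r => ∫ q, E.indicator k (r, q) ∂μ := by
    filter_upwards [ae_restrict_mem measurableSet_Ioc] with r hr using h1 r hr
  have hintgr : Integrable (fun r => ⟪w r, ∫ q in s..r, w q⟫) μ :=
    (hg.integral_prod_left).congr h1ae.symm
  refine ⟨hintgr, ?_⟩
  have hD : ∫ r in Set.Ioc s t, ⟪w r, ∫ q in s..r, w q⟫ = ∫ p, E.indicator k p ∂(μ.prod μ) := by
    rw [integral_congr_ae h1ae]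
    exact (integral_integral (f := fun r q => E.indicator k (r, q)) hg)
  -- swap symmetry : D = D'
  have hswap : ∫ p, E.indicator k p ∂(μ.prod μ) = ∫ p, E'.indicator k p ∂(μ.prod μ) := by
    have hmp : MeasurePreserving (Prod.swap : ℝ × ℝ → ℝ × ℝ) (μ.prod μ) (μ.prod μ) :=
      Measure.measurePreserving_swap
    have hswap' := hmp.integral_comp MeasurableEquiv.prodComm.measurableEmbedding
      (E.indicator k)
    have hpt : ∀ p : ℝ × ℝ, E.indicator k (Prod.swap p) = E'.indicator k p := by
      intro p
      by_cases hp : p ∈ E'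
      · have hp2 : Prod.swap p ∈ E := hp
        rw [Set.indicator_of_mem hp2, Set.indicator_of_mem hp]
        exact real_inner_comm _ _
      · have hp2 : Prod.swap p ∉ E := hp
        rw [Set.indicator_of_notMem hp2, Set.indicator_of_notMem hp]
    rw [← hswap']
    exact integral_congr_ae (Filter.Eventually.of_forall hpt)
  -- sum : D + D' = full integral
  have hae_mem1 : ∀ᵐ p : ℝ × ℝ ∂(μ.prod μ), p.1 ∈ Set.Ioc s t := by
    rw [ae_iff]
    refine measure_mono_null (t := ((Set.Ioc s t)ᶜ ×ˢ (Set.univ : Set ℝ)))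
      (fun p hp => ⟨hp, Set.mem_univ _⟩) ?_
    rw [Measure.prod_prod]
    have : μ (Set.Ioc s t)ᶜ = 0 := by
      rw [hμdef, Measure.restrict_apply measurableSet_Ioc.compl]
      simp
    rw [this, zero_mul]
  have hae_mem2 : ∀ᵐ p : ℝ × ℝ ∂(μ.prod μ), p.2 ∈ Set.Ioc s t := by
    rw [ae_iff]
    refine measure_mono_null (t := ((Set.univ : Set ℝ) ×ˢ (Set.Ioc s t)ᶜ))
      (fun p hp => ⟨Set.mem_univ _, hp⟩) ?_
    rw [Measure.prod_prod]
    have : μ (Set.Ioc s t)ᶜ = 0 := by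
      rw [hμdef, Measure.restrict_apply measurableSet_Ioc.compl]
      simp
    rw [this, mul_zero]
  have hdiag : ∀ᵐ p : ℝ × ℝ ∂(μ.prod μ), p.1 ≠ p.2 := by
    rw [ae_iff]
    have hms : MeasurableSet {p : ℝ × ℝ | ¬ p.1 ≠ p.2} := by
      simpa using (measurableSet_eq_fun (measurable_fst (α := ℝ) (β := ℝ)) measurable_snd)
    rw [Measure.prod_apply hms]
    have : ∀ r : ℝ, μ (Prod.mk r ⁻¹' {p : ℝ × ℝ | ¬ p.1 ≠ p.2}) = 0 := by
      intro r
      have hsub : (Prod.mk r ⁻¹' {p : ℝ × ℝ | ¬ p.1 ≠ p.2}) ⊆ {r} := by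
        intro q hq
        simp only [Set.mem_preimage, Set.mem_setOf_eq, not_not] at hq
        simp [hq]
      refine measure_mono_null hsub ?_
      exact le_antisymm (le_trans (Measure.restrict_le_self _) (by simp)) zero_le
    simp only [this]
    simp
  have hsum : (∫ p, E.indicator k p ∂(μ.prod μ)) + (∫ p, E'.indicator k p ∂(μ.prod μ))
      = ∫ p, k p ∂(μ.prod μ) := by
    rw [← integral_add hg hg']
    refine integral_congr_ae ?_
    filter_upwards [hae_mem1, hae_mem2, hdiag] with p hp1 hp2 hne
    by_cases hle : p.2 ≤ p.1
    · have hpE : p ∈ E := ⟨hp2.1, hle⟩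
      have hpE' : p ∉ E' := by
        intro hc
        exact hne (le_antisymm (hc.2) hle)
      rw [Set.indicator_of_mem hpE, Set.indicator_of_notMem hpE', add_zero]
    · push_neg at hle
      have hpE : p ∉ E := by
        intro hc; exact absurd hc.2 (not_le.mpr hle)
      have hpE' : p ∈ E' := ⟨hp1.1, hle.le⟩
      rw [Set.indicator_of_notMem hpE, Set.indicator_of_mem hpE', zero_add]
  have hfull : ∫ p, k p ∂(μ.prod μ) = ‖∫ q, w q ∂μ‖ ^ 2 := by
    have := (integral_integral (f := fun r q => k (r, q)) hkint).symm
    rw [this]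
    have hrow : ∀ r : ℝ, ∫ q, k (r, q) ∂μ = ⟪w r, ∫ q, w q ∂μ⟫ := fun r =>
      integral_inner hwμ (w r)
    simp_rw [hrow]
    have hcomm : ∀ r : ℝ, ⟪w r, ∫ q, w q ∂μ⟫ = ⟪(∫ q, w q ∂μ), w r⟫ := fun r =>
      real_inner_comm _ _
    simp_rw [hcomm]
    rw [integral_inner hwμ (∫ q, w q ∂μ), real_inner_self_eq_norm_sq]
  have : ∫ q in Set.Ioc s t, w q = ∫ q, w q ∂μ := rfl
  rw [hD, this]
  have : ∫ p, E.indicator k p ∂(μ.prod μ) = 2⁻¹ * ‖∫ q, w q ∂μ‖ ^ 2 := by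
    have h2 : (∫ p, E.indicator k p ∂(μ.prod μ)) + (∫ p, E.indicator k p ∂(μ.prod μ))
        = ‖∫ q, w q ∂μ‖ ^ 2 := by rw [hswap] at *; rw [hsum, hfull] at *
    linarith
  exact this


/-- Contraction property for two solutions of the gradient flow `-u' ∈ ∂F(u)`
in a real Hilbert space: `t ↦ ‖u₁(t) - u₂(t)‖` is nonincreasing on `[0, T]`. -/
theorem stmt_2 {H : Type*} [NormedAddCommGroup H] [InnerProductSpace ℝ H] [CompleteSpace H]
    (F : H → ℝ) (T : ℝ) (hT : 0 < T)
    (u₁ u₂ w₁ w₂ : ℝ → H)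
    (hu₁cont : ContinuousOn u₁ (Set.Icc 0 T))
    (hu₂cont : ContinuousOn u₂ (Set.Icc 0 T))
    (hw₁int : IntervalIntegrable w₁ volume 0 T)
    (hw₂int : IntervalIntegrable w₂ volume 0 T)
    (hu₁ : ∀ t ∈ Set.Icc (0 : ℝ) T, u₁ t = u₁ 0 + ∫ s in (0 : ℝ)..t, w₁ s)
    (hu₂ : ∀ t ∈ Set.Icc (0 : ℝ) T, u₂ t = u₂ 0 + ∫ s in (0 : ℝ)..t, w₂ s)
    (hsub : ∀ᵐ t ∂(volume.restrict (Set.Ioo (0 : ℝ) T)),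
      (∀ φ : H, F (u₁ t) + ⟪-(w₁ t), φ - u₁ t⟫ ≤ F φ) ∧
      (∀ φ : H, F (u₂ t) + ⟪-(w₂ t), φ - u₂ t⟫ ≤ F φ)) :
    (∀ s t : ℝ, 0 ≤ s → s ≤ t → t ≤ T → ‖u₁ t - u₂ t‖ ≤ ‖u₁ s - u₂ s‖) ∧
    (u₁ 0 = u₂ 0 → ∀ t ∈ Set.Icc (0 : ℝ) T, u₁ t = u₂ t) := by
  have key : ∀ s t : ℝ, 0 ≤ s → s ≤ t → t ≤ T → ‖u₁ t - u₂ t‖ ≤ ‖u₁ s - u₂ s‖ := by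
    intro s t hs hst htT
    set w : ℝ → H := fun r => w₁ r - w₂ r with hwdef
    have hmono : ∀ a b : ℝ, 0 ≤ a → a ≤ b → b ≤ T → Set.uIcc a b ⊆ Set.uIcc 0 T := by
      intro a b ha hab hbT
      rw [Set.uIcc_of_le hab, Set.uIcc_of_le hT.le]
      exact Set.Icc_subset_Icc ha hbT
    have hwI : IntervalIntegrable w volume 0 T := hw₁int.sub hw₂int
    have hwst : IntervalIntegrable w volume s t :=
      hwI.mono_set (hmono s t hs hst htT)
    have hwIoc : IntegrableOn w (Set.Ioc s t) := hwst.1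
    set μ := volume.restrict (Set.Ioc s t) with hμdef
    have hwμ : Integrable w μ := hwIoc
    -- the formula for the difference
    have hV : ∀ r ∈ Set.Icc s t, u₁ r - u₂ r = (u₁ s - u₂ s) + ∫ q in s..r, w q := by
      intro r hr
      have hr0T : r ∈ Set.Icc (0 : ℝ) T := ⟨le_trans hs hr.1, le_trans hr.2 htT⟩
      have hs0T : s ∈ Set.Icc (0 : ℝ) T := ⟨hs, le_trans hst htT⟩
      have h0s : IntervalIntegrable w volume 0 s := hwI.mono_set (hmono 0 s le_rfl hs (le_trans hst htT))
      have hsr : IntervalIntegrable w volume s r :=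
        hwI.mono_set (hmono s r hs hr.1 (le_trans hr.2 htT))
      have h0r1 : IntervalIntegrable w₁ volume 0 r :=
        hw₁int.mono_set (hmono 0 r le_rfl hr0T.1 hr0T.2)
      have h0r2 : IntervalIntegrable w₂ volume 0 r :=
        hw₂int.mono_set (hmono 0 r le_rfl hr0T.1 hr0T.2)
      have h0s1 : IntervalIntegrable w₁ volume 0 s :=
        hw₁int.mono_set (hmono 0 s le_rfl hs0T.1 hs0T.2)
      have h0s2 : IntervalIntegrable w₂ volume 0 s :=
        hw₂int.mono_set (hmono 0 s le_rfl hs0T.1 hs0T.2)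
      have hr1 : ∫ q in (0:ℝ)..r, w q = (∫ q in (0:ℝ)..r, w₁ q) - ∫ q in (0:ℝ)..r, w₂ q :=
        intervalIntegral.integral_sub h0r1 h0r2
      have hs1 : ∫ q in (0:ℝ)..s, w q = (∫ q in (0:ℝ)..s, w₁ q) - ∫ q in (0:ℝ)..s, w₂ q :=
        intervalIntegral.integral_sub h0s1 h0s2
      have hadd : (∫ q in (0:ℝ)..s, w q) + ∫ q in s..r, w q = ∫ q in (0:ℝ)..r, w q :=
        intervalIntegral.integral_add_adjacent_intervals h0s hsr
      rw [hu₁ r hr0T, hu₂ r hr0T, hu₁ s hs0T, hu₂ s hs0T]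
      have : ∫ q in s..r, w q = ((∫ q in (0:ℝ)..r, w₁ q) - ∫ q in (0:ℝ)..r, w₂ q)
          - ((∫ q in (0:ℝ)..s, w₁ q) - ∫ q in (0:ℝ)..s, w₂ q) := by
        rw [← hr1, ← hs1, ← hadd]; abel
      rw [this]; abel
    -- a.e. inequality
    have hineq : ∀ᵐ r ∂μ, ⟪w r, u₁ r - u₂ r⟫ ≤ 0 := by
      have h2 := (ae_restrict_iff' measurableSet_Ioo).mp hsub
      have h3 : ∀ᵐ r ∂μ, r ∈ Set.Ioo (0:ℝ) T →
          (∀ φ : H, F (u₁ r) + ⟪-(w₁ r), φ - u₁ r⟫ ≤ F φ) ∧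
          (∀ φ : H, F (u₂ r) + ⟪-(w₂ r), φ - u₂ r⟫ ≤ F φ) := ae_restrict_of_ae h2
      have h4 : ∀ᵐ r ∂μ, r ∈ Set.Ioc s t := ae_restrict_mem measurableSet_Ioc
      have h5 : ∀ᵐ r ∂μ, r ≠ T := by
        rw [ae_iff]
        refine measure_mono_null (t := {T}) (fun r hr => by simpa using hr) ?_
        exact le_antisymm (le_trans (Measure.restrict_le_self _) (by simp)) zero_le
      filter_upwards [h3, h4, h5] with r hr3 hr4 hr5
      have hrT : r < T := lt_of_le_of_ne (le_trans hr4.2 htT) hr5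
      have hr0 : 0 < r := lt_of_le_of_lt hs hr4.1
      obtain ⟨P1, P2⟩ := hr3 ⟨hr0, hrT⟩
      have a1 := P1 (u₂ r)
      have a2 := P2 (u₁ r)
      have e : ⟪w r, u₁ r - u₂ r⟫
          = ⟪-(w₁ r), u₂ r - u₁ r⟫ + ⟪-(w₂ r), u₁ r - u₂ r⟫ := by
        simp only [hwdef, inner_neg_left, inner_sub_left, inner_sub_right]
        ring
      rw [e]
      linarith
    have hJle : ∫ r in Set.Ioc s t, ⟪w r, u₁ r - u₂ r⟫ ≤ 0 := integral_nonpos_of_ae hineq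
    obtain ⟨hintB, hB⟩ := half_sq hst hwIoc
    set I := ∫ q in Set.Ioc s t, w q with hIdef
    have hVt : u₁ t - u₂ t = (u₁ s - u₂ s) + I := by
      have h := hV t ⟨hst, le_rfl⟩
      rwa [intervalIntegral.integral_of_le hst] at h
    have hJeq : ∫ r in Set.Ioc s t, ⟪w r, u₁ r - u₂ r⟫
        = ⟪I, u₁ s - u₂ s⟫ + 2⁻¹ * ‖I‖ ^ 2 := by
      have hcong : (fun r => ⟪w r, u₁ r - u₂ r⟫)
          =ᵐ[μ] fun r => ⟪w r, u₁ s - u₂ s⟫ + ⟪w r, ∫ q in s..r, w q⟫ := by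
        filter_upwards [ae_restrict_mem measurableSet_Ioc] with r hr
        rw [hV r ⟨hr.1.le, hr.2⟩, inner_add_right]
      have hint1 : Integrable (fun r => ⟪w r, u₁ s - u₂ s⟫) μ := by
        have := (innerSL ℝ (u₁ s - u₂ s)).integrable_comp hwμ
        refine this.congr (Filter.Eventually.of_forall fun r => ?_)
        exact real_inner_comm _ _
      calc ∫ r in Set.Ioc s t, ⟪w r, u₁ r - u₂ r⟫
          = ∫ r, (⟪w r, u₁ s - u₂ s⟫ + ⟪w r, ∫ q in s..r, w q⟫) ∂μ :=
            integral_congr_ae hcong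
        _ = (∫ r, ⟪w r, u₁ s - u₂ s⟫ ∂μ) + ∫ r, ⟪w r, ∫ q in s..r, w q⟫ ∂μ :=
            integral_add hint1 hintB
        _ = ⟪I, u₁ s - u₂ s⟫ + 2⁻¹ * ‖I‖ ^ 2 := by
            rw [hB]
            congr 1
            have : ∀ r : ℝ, ⟪w r, u₁ s - u₂ s⟫ = ⟪u₁ s - u₂ s, w r⟫ :=
              fun r => real_inner_comm _ _
            simp_rw [this]
            rw [integral_inner hwμ]
            exact real_inner_comm _ _
    have hkey : ‖u₁ t - u₂ t‖ ^ 2 ≤ ‖u₁ s - u₂ s‖ ^ 2 := by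
      rw [hVt, norm_add_sq_real]
      have hc : ⟪u₁ s - u₂ s, I⟫ = ⟪I, u₁ s - u₂ s⟫ := real_inner_comm _ _
      rw [hJeq] at hJle
      linarith
    nlinarith [norm_nonneg (u₁ t - u₂ t), norm_nonneg (u₁ s - u₂ s)]
  refine ⟨key, fun h0 r hr => ?_⟩
  have := key 0 r le_rfl hr.1 hr.2
  rw [h0] at this
  simp only [sub_self, norm_zero] at this
  have hnn := norm_nonneg (u₁ r - u₂ r)
  have : ‖u₁ r - u₂ r‖ = 0 := le_antisymm this hnn
  exact sub_eq_zero.mp (norm_eq_zero.mp this)
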